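/- For every S > 0, c > 0 and a ∈ ℝ, one has 2c + √(S²/c² + (a−c)²) + √(S²/c² + (a+c)²) ≥ 6·√(S/√3), with equality if and only if a = 0 and c = √(S/√3). -/

import Mathlib

theorem aux_minkowski (K a c u v w : ℝ) (hK : 0 < K)
    (u0 : 0 ≤ u) (v0 : 0 ≤ v) (w0 : 0 ≤ w)
    (hu2 : u ^ 2 = K + (a - c) ^ 2) (hv2 : v ^ 2 = K + (a + c) ^ 2)
    (hw2 : w ^ 2 = K + c ^ 2) :
    u + v ≥ 2 * w ∧ (u + v = 2 * w → a = 0) := by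
  have huv2 : (u * v) ^ 2 = (K + c ^ 2 - a ^ 2) ^ 2 + 4 * a ^ 2 * K := by
    rw [mul_pow, hu2, hv2]; ring
  have huv : u * v ≥ K + c ^ 2 - a ^ 2 := by
    by_contra hlt
    push_neg at hlt
    have huv0 : 0 ≤ u * v := mul_nonneg u0 v0
    nlinarith [huv2, sq_nonneg a]
  constructor
  · by_contra hlt
    push_neg at hlt
    nlinarith [huv, hu2, hv2, hw2]
  · intro heq
    have huveq : u * v = K + c ^ 2 - a ^ 2 := by nlinarith [hu2, hv2, hw2]
    have h0 : 4 * a ^ 2 * K = 0 := by nlinarith [huv2, huveq]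
    have ha2 : a ^ 2 = 0 := by nlinarith [sq_nonneg a]
    exact pow_eq_zero_iff (n := 2) (by norm_num) |>.1 ha2

theorem aux_height (t c w : ℝ) (ht : 0 < t) (hc : 0 < c) (w0 : 0 ≤ w)
    (hwc : w ^ 2 * c ^ 2 = 3 * t ^ 4 + c ^ 4) :
    c + w ≥ 3 * t ∧ (c + w = 3 * t → c = t) := by
  have hfac : 0 ≤ 3 * t * ((t - c) ^ 2 * (t + 2 * c)) := by positivity
  constructor
  · by_contra hlt
    push_neg at hlt
    have hb : 0 < 3 * t - c := by linarith
    have h1 : w ^ 2 < (3 * t - c) ^ 2 := by nlinarith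
    have h2 : w ^ 2 * c ^ 2 < (3 * t - c) ^ 2 * c ^ 2 :=
      mul_lt_mul_of_pos_right h1 (by positivity)
    nlinarith [h2, hwc]
  · intro heq
    have hw3 : w = 3 * t - c := by linarith
    have key : 3 * t * ((t - c) ^ 2 * (t + 2 * c)) = 0 := by
      rw [hw3] at hwc; nlinarith [hwc]
    have hpos : 0 < 3 * t * (t + 2 * c) := by positivity
    have h0 : (t - c) ^ 2 = 0 := by nlinarith [sq_nonneg (t - c)]
    have := pow_eq_zero_iff (n := 2) (by norm_num) |>.1 h0
    linarith

/-- Among triangles `Ω_{a,c}` of fixed area `S`, the equilateral one (`a = 0`,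
`c = √(S/√3)`) uniquely minimises the perimeter. -/
theorem perimeter_triangle_ge (S c : ℝ) (a : ℝ) (hS : 0 < S) (hc : 0 < c) :
    2 * c + Real.sqrt (S ^ 2 / c ^ 2 + (a - c) ^ 2) +
        Real.sqrt (S ^ 2 / c ^ 2 + (a + c) ^ 2) ≥
      6 * Real.sqrt (S / Real.sqrt 3) ∧
    (2 * c + Real.sqrt (S ^ 2 / c ^ 2 + (a - c) ^ 2) +
        Real.sqrt (S ^ 2 / c ^ 2 + (a + c) ^ 2) =
      6 * Real.sqrt (S / Real.sqrt 3) ↔ a = 0 ∧ c = Real.sqrt (S / Real.sqrt 3)) := by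
  have h3 : (0:ℝ) < Real.sqrt 3 := Real.sqrt_pos.2 (by norm_num)
  set t := Real.sqrt (S / Real.sqrt 3) with ht
  have htpos : 0 < t := Real.sqrt_pos.2 (div_pos hS h3)
  have ht2 : t ^ 2 = S / Real.sqrt 3 := Real.sq_sqrt (le_of_lt (div_pos hS h3))
  have h3sq : Real.sqrt 3 ^ 2 = 3 := Real.sq_sqrt (by norm_num)
  have hS_eq : S = Real.sqrt 3 * t ^ 2 := by
    rw [ht2]; field_simp
  have hS2 : S ^ 2 = 3 * t ^ 4 := by
    rw [hS_eq, mul_pow, h3sq]; ring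
  set K : ℝ := S ^ 2 / c ^ 2 with hKdef
  have hK : 0 < K := div_pos (by positivity) (by positivity)
  have hKc : K * c ^ 2 = S ^ 2 := by
    rw [hKdef]; exact div_mul_cancel₀ _ (by positivity)
  set u := Real.sqrt (K + (a - c) ^ 2) with hu
  set v := Real.sqrt (K + (a + c) ^ 2) with hv
  have u0 : 0 ≤ u := Real.sqrt_nonneg _
  have v0 : 0 ≤ v := Real.sqrt_nonneg _
  have hu2 : u ^ 2 = K + (a - c) ^ 2 := Real.sq_sqrt (by positivity)
  have hv2 : v ^ 2 = K + (a + c) ^ 2 := Real.sq_sqrt (by positivity)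
  set w := Real.sqrt (K + c ^ 2) with hw
  have w0 : 0 ≤ w := Real.sqrt_nonneg _
  have hw2 : w ^ 2 = K + c ^ 2 := Real.sq_sqrt (by positivity)
  have hwc : w ^ 2 * c ^ 2 = 3 * t ^ 4 + c ^ 4 := by
    rw [hw2]; linear_combination hKc + hS2
  obtain ⟨hmink, hminkEq⟩ := aux_minkowski K a c u v w hK u0 v0 w0 hu2 hv2 hw2
  obtain ⟨hcw, hcwEq⟩ := aux_height t c w htpos hc w0 hwc
  constructor
  · linarith
  constructor
  · intro hEq
    have heq1 : u + v = 2 * w := by linarith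
    have heq2 : c + w = 3 * t := by linarith
    exact ⟨hminkEq heq1, hcwEq heq2⟩
  · rintro ⟨ha, hct⟩
    subst ha
    have hK' : K = 3 * t ^ 2 := by
      rw [hKdef, hS2, hct]
      field_simp
    have huval : u = 2 * t := by
      rw [hu, hK', hct]
      rw [show 3 * t ^ 2 + (0 - t) ^ 2 = (2 * t) ^ 2 by ring]
      exact Real.sqrt_sq (by positivity)
    have hvval : v = 2 * t := by
      rw [hv, hK', hct]
      rw [show 3 * t ^ 2 + (0 + t) ^ 2 = (2 * t) ^ 2 by ring]
      exact Real.sqrt_sq (by positivity)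
    rw [huval, hvval, hct]; ring
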